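/- arXiv:2601.12932 — 6 statements merged into one kernel-verified Lean document; each statement's English description precedes it below -/
import Mathlib

section
/- Let X be a preordered topological space. The elements A of Up(X) for which there exists an open U with U ∪ A = X and U ∩ A = ∅ are exactly the closed upper subsets of X. Consequently, X is upper semi-closed (the upward closure ↑x of every point is closed) if and only if every upper set of X is a union of closed upper sets. -/
/-- The upper sets `A` admitting an open `U` with `U ∪ A = X` and `U ∩ A = ∅`
are exactly the closed upper sets; consequently, `X` is upper semi-closed iff
every upper set is a union of closed upper sets. -/
theorem stmt8 {X : Type*} [TopologicalSpace X] [Preorder X] :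
    (∀ A : Set X, IsUpperSet A →
      ((∃ U : Set X, IsOpen U ∧ U ∪ A = Set.univ ∧ U ∩ A = ∅) ↔ IsClosed A)) ∧
    ((∀ x : X, IsClosed (Set.Ici x)) ↔
      (∀ A : Set X, IsUpperSet A →
        ∃ S : Set (Set X), (∀ C ∈ S, IsClosed C ∧ IsUpperSet C) ∧ A = ⋃₀ S)) := by
  constructor
  · intro A _
    constructor
    · rintro ⟨U, hU, hunion, hinter⟩
      have : U = Aᶜ := by
        ext y
        constructor
        · intro hy hyA
          exact absurd (Set.mem_inter hy hyA) (by simp [hinter])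
        · intro hy
          rcases (Set.eq_univ_iff_forall.mp hunion y) with h | h
          · exact h
          · exact absurd h hy
      rw [← isOpen_compl_iff, ← this]; exact hU
    · intro hA
      exact ⟨Aᶜ, hA.isOpen_compl, Set.compl_union_self A,
        Set.compl_inter_self A⟩
  · constructor
    · intro h A hA
      refine ⟨(fun x => Set.Ici x) '' A, ?_, ?_⟩
      · rintro C ⟨x, _, rfl⟩
        exact ⟨h x, isUpperSet_Ici x⟩
      · ext y
        simp only [Set.mem_sUnion, Set.mem_image]
        constructor
        · intro hy; exact ⟨Set.Ici y, ⟨y, hy, rfl⟩, le_refl y⟩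
        · rintro ⟨C, ⟨x, hx, rfl⟩, hy⟩; exact hA hy hx
    · intro h x
      obtain ⟨S, hS, hEq⟩ := h (Set.Ici x) (isUpperSet_Ici x)
      have hx : x ∈ ⋃₀ S := hEq ▸ Set.self_mem_Ici
      obtain ⟨C, hCS, hxC⟩ := hx
      have : Set.Ici x = C := by
        apply Set.Subset.antisymm
        · exact fun y hy => (hS C hCS).2 hy hxC
        · intro y hy; rw [hEq]; exact ⟨C, hCS, hy⟩
      rw [this]; exact (hS C hCS).1
end

section
/- Let X be a preordered topological space. X is lower semi-closed (the downward closure ↓x of every point is topologically closed) if and only if every upper set of X is an intersection of open upper sets. -/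
/-- A preordered topological space is lower semi-closed iff every upper set is
an intersection of open upper sets. -/
theorem stmt9 {X : Type*} [TopologicalSpace X] [Preorder X] :
    (∀ x : X, IsClosed (Set.Iic x)) ↔
      (∀ A : Set X, IsUpperSet A →
        ∃ S : Set (Set X), (∀ U ∈ S, IsOpen U ∧ IsUpperSet U) ∧ A = ⋂₀ S) := by
  constructor
  · intro h A hA
    refine ⟨(fun x => (Set.Iic x)ᶜ) '' Aᶜ, ?_, ?_⟩
    · rintro U ⟨x, _, rfl⟩
      exact ⟨(h x).isOpen_compl, (isLowerSet_Iic x).compl⟩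
    · ext y
      simp only [Set.mem_sInter, Set.mem_image, Set.mem_compl_iff, Set.mem_Iic]
      constructor
      · rintro hy U ⟨x, hx, rfl⟩
        exact fun hle => hx (hA hle hy)
      · intro hy
        by_contra hyA
        exact hy _ ⟨y, hyA, rfl⟩ le_rfl
  · intro h x
    obtain ⟨S, hS, hEq⟩ := h (Set.Iic x)ᶜ (isLowerSet_Iic x).compl
    have hx : x ∉ (Set.Iic x)ᶜ := fun hx => hx le_rfl
    rw [hEq, Set.mem_sInter] at hx
    push_neg at hx
    obtain ⟨U, hU, hxU⟩ := hx
    have hUsub : U ⊆ (Set.Iic x)ᶜ := fun y hy hle => hxU ((hS U hU).2 hle hy)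
    have hsub : (Set.Iic x)ᶜ ⊆ U := by rw [hEq]; exact Set.sInter_subset_of_mem hU
    have : (Set.Iic x)ᶜ = U := le_antisymm hsub hUsub
    rw [← isOpen_compl_iff, this]
    exact (hS U hU).1
end

section
/- Let X be a preordered topological space and let U be a completely prime complete filter of upper sets of X. Then there exists x ∈ X such that U is exactly the collection of upper sets of X containing x; moreover x is unique up to the equivalence ≤ ∩ ≥. -/
/-- Every completely prime complete filter of upper sets of a preordered
topological space is the collection of upper sets containing some point `x`,
unique up to the equivalence `≤ ∩ ≥`. -/
theorem stmt11 {X : Type*} [TopologicalSpace X] [Preorder X]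
    (𝒰 : Set (Set X))
    (hupper : ∀ A ∈ 𝒰, IsUpperSet A)
    (hup : ∀ A B : Set X, IsUpperSet B → A ∈ 𝒰 → A ⊆ B → B ∈ 𝒰)
    (hinf : ∀ S : Set (Set X), S ⊆ 𝒰 → ⋂₀ S ∈ 𝒰)
    (hprime : ∀ S : Set (Set X), (∀ A ∈ S, IsUpperSet A) → ⋃₀ S ∈ 𝒰 → ∃ A ∈ S, A ∈ 𝒰) :
    ∃ x : X, 𝒰 = {A : Set X | IsUpperSet A ∧ x ∈ A} ∧
      ∀ y : X, 𝒰 = {A : Set X | IsUpperSet A ∧ y ∈ A} → x ≤ y ∧ y ≤ x := by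
  have hM : ⋂₀ 𝒰 ∈ 𝒰 := hinf 𝒰 subset_rfl
  set M := ⋂₀ 𝒰 with hMdef
  have hMsub : ∀ A ∈ 𝒰, M ⊆ A := fun A hA => Set.sInter_subset_of_mem hA
  -- M = union of principal upper sets of its elements
  have hMeq : ⋃₀ ((fun x => Set.Ici x) '' M) = M := by
    apply subset_antisymm
    · rintro z ⟨_, ⟨x, hx, rfl⟩, hz⟩
      exact hupper M hM hz hx
    · intro x hx
      exact ⟨Set.Ici x, ⟨x, hx, rfl⟩, le_refl x⟩
  obtain ⟨A, ⟨x, hxM, rfl⟩, hA𝒰⟩ := hprime ((fun x => Set.Ici x) '' M)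
    (by rintro _ ⟨x, _, rfl⟩; exact isUpperSet_Ici x) (by rw [hMeq]; exact hM)
  refine ⟨x, ?_, ?_⟩
  · ext A
    constructor
    · intro hA
      exact ⟨hupper A hA, hMsub A hA hxM⟩
    · rintro ⟨hAup, hxA⟩
      exact hup (Set.Ici x) A hAup hA𝒰 (fun z hz => hAup hz hxA)
  · intro y hy
    constructor
    · have := hy ▸ hA𝒰
      exact this.2
    · have : Set.Ici y ∈ 𝒰 := by rw [hy]; exact ⟨isUpperSet_Ici y, le_refl y⟩
      exact hMsub _ this hxM
end

section
/- Let X be a preordered topological space, C an irreducible closed subset of X, and x ∈ X. Then the following are equivalent: (a) for every open U and upper set A with U ∪ A = X, U meets C or x ∈ A; (b) C ∩ ↓x ≠ ∅. -/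
/-- The totality condition on an irreducible pair `(C, x)` is equivalent to
`C ∩ ↓x ≠ ∅`. -/
theorem stmt12 {X : Type*} [TopologicalSpace X] [Preorder X]
    (C : Set X) (hC : IsIrreducible C) (hCc : IsClosed C) (x : X) :
    (∀ U A : Set X, IsOpen U → IsUpperSet A → U ∪ A = Set.univ →
      (U ∩ C).Nonempty ∨ x ∈ A) ↔ (C ∩ Set.Iic x).Nonempty := by
  constructor
  · intro h
    by_contra hne
    rcases h Cᶜ {y | ∃ c ∈ C, c ≤ y} hCc.isOpen_compl
      (fun a b hab ⟨c, hc, hca⟩ => ⟨c, hc, hca.trans hab⟩)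
      (by
        ext y; simp only [Set.mem_union, Set.mem_univ, iff_true, Set.mem_compl_iff]
        by_cases hy : y ∈ C
        · exact Or.inr ⟨y, hy, le_refl y⟩
        · exact Or.inl hy) with h' | ⟨c, hc, hcx⟩
    · exact absurd h'.choose_spec.2 h'.choose_spec.1
    · exact hne ⟨c, hc, hcx⟩
  · rintro ⟨c, hcC, hcx⟩ U A hU hA hUA
    by_cases hx : x ∈ A
    · exact Or.inr hx
    · left
      refine ⟨c, ?_, hcC⟩
      have : c ∉ A := fun hcA => hx (hA hcx hcA)
      have := hUA ▸ Set.mem_univ c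
      rcases (Set.mem_union ..).1 this with h | h
      · exact h
      · exact absurd h ‹c ∉ A›
end

section
/- Let X be a preordered topological space, C an irreducible closed subset of X, and x ∈ X. Then the following are equivalent: (a) for every open U and upper set A with U ∩ A = ∅, U is disjoint from C or x ∉ A; (b) C ⊆ cl(↑x), the topological closure of the upward closure of x. -/
/-- The consistency condition on an irreducible pair `(C, x)` is equivalent to
`C ⊆ cl(↑x)`. -/
theorem stmt13 {X : Type*} [TopologicalSpace X] [Preorder X]
    (C : Set X) (hC : IsIrreducible C) (hCc : IsClosed C) (x : X) :
    (∀ U A : Set X, IsOpen U → IsUpperSet A → U ∩ A = ∅ →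
      U ∩ C = ∅ ∨ x ∉ A) ↔ C ⊆ closure (Set.Ici x) := by
  constructor
  · intro h c hc
    by_contra hcl
    rcases h (closure (Set.Ici x))ᶜ (Set.Ici x) (isClosed_closure.isOpen_compl)
        (isUpperSet_Ici x) (by
          ext y
          simp only [Set.mem_inter_iff, Set.mem_compl_iff, Set.mem_empty_iff_false, iff_false,
            not_and]
          exact fun hy hy2 => hy (subset_closure hy2)) with h1 | h2
    · exact absurd (Set.eq_empty_iff_forall_notMem.mp h1 c ⟨hcl, hc⟩) not_false
    · exact h2 le_rfl
  · intro h U A hU hA hUA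
    by_contra hcon
    push_neg at hcon
    obtain ⟨hne, hxA⟩ := hcon
    obtain ⟨c, hcU, hcC⟩ := hne
    have : (U ∩ Set.Ici x).Nonempty := by
      have := h hcC
      rw [mem_closure_iff] at this
      exact this U hU hcU
    obtain ⟨y, hyU, hyx⟩ := this
    exact absurd (Set.eq_empty_iff_forall_notMem.mp hUA y ⟨hyU, hA hyx hxA⟩) not_false
end

section
/- Let X be a preordered topological space, C an irreducible closed subset of X, and x ∈ X. Then: (a) [for every open U and upper set A, A ⊆ U implies (U meets C or x ∉ A)] if and only if C ∩ ↑x ≠ ∅; and (b) [for every open U and upper set A, U ⊆ A implies (U disjoint from C or x ∈ A)] if and only if C ⊆ cl(↓x). -/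
/-- The containment condition on an irreducible pair `(C, x)` is equivalent to
`C ∩ ↑x ≠ ∅`, and the inclusion condition is equivalent to `C ⊆ cl(↓x)`. -/
theorem stmt14 {X : Type*} [TopologicalSpace X] [Preorder X]
    (C : Set X) (hC : IsIrreducible C) (hCc : IsClosed C) (x : X) :
    ((∀ U A : Set X, IsOpen U → IsUpperSet A → A ⊆ U →
        (U ∩ C).Nonempty ∨ x ∉ A) ↔ (C ∩ Set.Ici x).Nonempty) ∧
    ((∀ U A : Set X, IsOpen U → IsUpperSet A → U ⊆ A →
        U ∩ C = ∅ ∨ x ∈ A) ↔ C ⊆ closure (Set.Iic x)) := by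
  constructor
  · constructor
    · intro h
      by_contra hne
      rw [Set.not_nonempty_iff_eq_empty] at hne
      have hsub : Set.Ici x ⊆ Cᶜ := by
        intro y hy hyC
        exact Set.eq_empty_iff_forall_notMem.mp hne y ⟨hyC, hy⟩
      rcases h Cᶜ (Set.Ici x) hCc.isOpen_compl (isUpperSet_Ici x) hsub with h1 | h2
      · rcases h1 with ⟨y, hy1, hy2⟩; exact hy1 hy2
      · exact h2 (le_refl x)
    · rintro ⟨c, hcC, hxc⟩ U A hU hA hAU
      by_cases hx : x ∈ A
      · exact Or.inl ⟨c, hAU (hA hxc hx), hcC⟩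
      · exact Or.inr hx
  · constructor
    · intro h c hcC
      by_contra hc
      have hU : IsOpen (closure (Set.Iic x))ᶜ := isClosed_closure.isOpen_compl
      rcases h _ (upperClosure (closure (Set.Iic x))ᶜ) hU (upperClosure _).upper
          (subset_upperClosure) with h1 | h2
      · exact Set.eq_empty_iff_forall_notMem.mp h1 c ⟨hc, hcC⟩
      · rcases h2 with ⟨u, hu, hux⟩
        exact hu (subset_closure hux)
    · intro h U A hU hA hUA
      by_cases hne : (U ∩ C).Nonempty
      · rcases hne with ⟨c, hcU, hcC⟩
        have : (U ∩ Set.Iic x).Nonempty := by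
          have := h hcC
          rw [mem_closure_iff] at this
          exact this U hU hcU
        rcases this with ⟨u, huU, hux⟩
        exact Or.inr (hA hux (hUA huU))
      · exact Or.inl (Set.not_nonempty_iff_eq_empty.mp hne)
end
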